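/- Fix integers n > 0 and k_0 ≥ 0. Define c_1 = 0 and c_{i} = p^{p^{k_0}·c_{i-1}} + c_{i-1} for 2 ≤ i ≤ n+1, and set b_0 = c_{n+1}. Then the set of integers c with 0 < c < b_0 such that p^{p^{k_0}·c} exactly divides b_0 − c equals {c_2, c_3, …, c_n}. -/

import Mathlib

/-- `cseq p k₀ i` is `c_{i+1}` of the paper: `c_1 = 0`, `c_{i+1} = p^(p^{k₀}·c_i) + c_i`. -/
def cseq (p k₀ : ℕ) : ℕ → ℕ
  | 0 => 0
  | i + 1 => p ^ (p ^ k₀ * cseq p k₀ i) + cseq p k₀ i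

lemma cseq_strictMono {p : ℕ} (hp : 0 < p) (k₀ : ℕ) : StrictMono (cseq p k₀) := by
  apply strictMono_nat_of_lt_succ
  intro i
  have : 0 < p ^ (p ^ k₀ * cseq p k₀ i) := pow_pos hp _
  simp only [cseq]
  omega

lemma cseq_dvd_sub {p : ℕ} (hp : 0 < p) (k₀ : ℕ) {j n : ℕ} (h : j ≤ n) :
    p ^ (p ^ k₀ * cseq p k₀ j) ∣ cseq p k₀ n - cseq p k₀ j := by
  induction n, h using Nat.le_induction with
  | base => simp
  | succ n hn ih =>
    have hle : cseq p k₀ j ≤ cseq p k₀ n := (cseq_strictMono hp k₀).monotone hn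
    have heq : cseq p k₀ (n + 1) - cseq p k₀ j
        = p ^ (p ^ k₀ * cseq p k₀ n) + (cseq p k₀ n - cseq p k₀ j) := by
      simp only [cseq]; omega
    rw [heq]
    exact dvd_add (pow_dvd_pow _ (Nat.mul_le_mul_left _ hle)) ih

lemma cseq_not_dvd_sub {p : ℕ} (hp : 1 < p) (k₀ : ℕ) {j n : ℕ} (h : j < n) :
    ¬ p ^ (p ^ k₀ * cseq p k₀ j + 1) ∣ cseq p k₀ n - cseq p k₀ j := by
  intro hdvd
  have hq : 1 ≤ p ^ k₀ := Nat.one_le_pow _ _ (by omega)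
  have hsucc : cseq p k₀ j + 1 ≤ cseq p k₀ (j + 1) :=
    cseq_strictMono (by omega) k₀ (Nat.lt_succ_self j)
  have hexp : p ^ k₀ * cseq p k₀ j + 1 ≤ p ^ k₀ * cseq p k₀ (j + 1) := by
    have := Nat.mul_le_mul_left (p ^ k₀) hsucc
    nlinarith
  have hdvd2 : p ^ (p ^ k₀ * cseq p k₀ j + 1) ∣ cseq p k₀ n - cseq p k₀ (j + 1) :=
    dvd_trans (pow_dvd_pow _ hexp) (cseq_dvd_sub (by omega) k₀ h)
  have hle1 : cseq p k₀ (j + 1) ≤ cseq p k₀ n := (cseq_strictMono (by omega) k₀).monotone h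
  have hle2 : cseq p k₀ j ≤ cseq p k₀ (j + 1) := by omega
  have heq : (cseq p k₀ n - cseq p k₀ j) - (cseq p k₀ n - cseq p k₀ (j + 1))
      = p ^ (p ^ k₀ * cseq p k₀ j) := by
    have : cseq p k₀ (j + 1) = p ^ (p ^ k₀ * cseq p k₀ j) + cseq p k₀ j := rfl
    omega
  have hdvd3 : p ^ (p ^ k₀ * cseq p k₀ j + 1) ∣ p ^ (p ^ k₀ * cseq p k₀ j) := by
    rw [← heq]; exact Nat.dvd_sub hdvd hdvd2
  have := (Nat.pow_dvd_pow_iff_le_right hp).mp hdvd3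
  omega

lemma cseq_exists_between {p : ℕ} (hp : 0 < p) (k₀ : ℕ) {c n : ℕ} (h : c < cseq p k₀ n) :
    ∃ j, j < n ∧ cseq p k₀ j ≤ c ∧ c < cseq p k₀ (j + 1) := by
  induction n with
  | zero => simp [cseq] at h
  | succ n ih =>
    by_cases hc : c < cseq p k₀ n
    · obtain ⟨j, hj, h1, h2⟩ := ih hc
      exact ⟨j, by omega, h1, h2⟩
    · exact ⟨n, Nat.lt_succ_self n, by omega, h⟩

theorem exact_divisor_set (p : ℕ) (hp : p.Prime) (n k₀ : ℕ) (hn : 0 < n) :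
    {c : ℕ | 0 < c ∧ c < cseq p k₀ n ∧
        p ^ (p ^ k₀ * c) ∣ (cseq p k₀ n - c) ∧ ¬ p ^ (p ^ k₀ * c + 1) ∣ (cseq p k₀ n - c)} =
      {c : ℕ | ∃ i, 2 ≤ i ∧ i ≤ n ∧ c = cseq p k₀ (i - 1)} := by
  have hp1 : 1 < p := hp.one_lt
  have hp0 : 0 < p := hp.pos
  ext c
  simp only [Set.mem_setOf_eq]
  constructor
  · rintro ⟨hc0, hcn, hdvd, hndvd⟩
    obtain ⟨j, hjn, hle, hlt⟩ := cseq_exists_between hp0 k₀ hcn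
    have hc1seq : cseq p k₀ 1 = 1 := by simp [cseq]
    have hj1 : 1 ≤ j := by
      by_contra hj0
      have : j = 0 := by omega
      subst this
      rw [hc1seq] at hlt
      omega
    have hceq : c = cseq p k₀ j := by
      by_contra hne
      have hlt' : cseq p k₀ j < c := lt_of_le_of_ne hle (Ne.symm hne)
      have hle1 : cseq p k₀ (j + 1) ≤ cseq p k₀ n := (cseq_strictMono hp0 k₀).monotone hjn
      have hdvd2 : p ^ (p ^ k₀ * c) ∣ cseq p k₀ n - cseq p k₀ (j + 1) :=
        dvd_trans (pow_dvd_pow _ (Nat.mul_le_mul_left _ hlt.le)) (cseq_dvd_sub hp0 k₀ hjn)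
      have heq : (cseq p k₀ n - c) - (cseq p k₀ n - cseq p k₀ (j + 1))
          = cseq p k₀ (j + 1) - c := by omega
      have hdvdA : p ^ (p ^ k₀ * c) ∣ cseq p k₀ (j + 1) - c := by
        rw [← heq]; exact Nat.dvd_sub hdvd hdvd2
      have hA0 : 0 < cseq p k₀ (j + 1) - c := by omega
      have hAle := Nat.le_of_dvd hA0 hdvdA
      have hAlt : cseq p k₀ (j + 1) - c < p ^ (p ^ k₀ * cseq p k₀ j) := by
        have : cseq p k₀ (j + 1) = p ^ (p ^ k₀ * cseq p k₀ j) + cseq p k₀ j := rfl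
        omega
      have hpow : p ^ (p ^ k₀ * cseq p k₀ j) ≤ p ^ (p ^ k₀ * c) :=
        Nat.pow_le_pow_right (by omega) (Nat.mul_le_mul_left _ hlt'.le)
      omega
    exact ⟨j + 1, by omega, by omega, by simpa using hceq⟩
  · rintro ⟨i, h2, hin, rfl⟩
    have hj1 : 1 ≤ i - 1 := by omega
    have hjn : i - 1 < n := by omega
    have hc0 : 0 < cseq p k₀ (i - 1) := by
      have : cseq p k₀ 0 < cseq p k₀ (i - 1) := cseq_strictMono hp0 k₀ (by omega)
      simpa [cseq] using this
    exact ⟨hc0, cseq_strictMono hp0 k₀ hjn,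
      cseq_dvd_sub hp0 k₀ hjn.le, cseq_not_dvd_sub hp1 k₀ hjn⟩
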